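/- Let J be an r-uniform hypergraph and X ⊆ V(J) such that every vertex v ∈ V(J) \ X has degree at least 1 in J. Let m = |V(J) \ X|. Then there exists an ordering v₁, …, v_m of V(J) \ X such that the number of indices i ∈ [m] for which v_i has degree at least 1 in the induced subhypergraph J[X ∪ {v₁, …, v_i}] is at least m/r. -/

import Mathlib

private lemma stmt9_key {V : Type*} [Fintype V] [DecidableEq V] (r : ℕ)
    (J : Finset (Finset V)) (hJ : ∀ e ∈ J, e.card = r) :
    ∀ n : ℕ, ∀ X : Finset V, (Finset.univ \ X).card = n →
      (∀ v ∈ Finset.univ \ X, ∃ e ∈ J, v ∈ e) →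
      ∃ l : List V, ∃ G : Finset (Fin l.length),
        l.Nodup ∧ l.toFinset = Finset.univ \ X ∧
        (∀ i ∈ G, ∃ e ∈ J, l.get i ∈ e ∧ e ⊆ X ∪ (l.take (i + 1)).toFinset) ∧
        n ≤ r * G.card := by
  intro n
  induction n using Nat.strong_induction_on with
  | _ n IH =>
    intro X hcard hdeg
    rcases Nat.eq_zero_or_pos n with h0 | hpos
    · refine ⟨[], ∅, List.nodup_nil, ?_, by simp, by simp [h0]⟩
      simp only [List.toFinset_nil]
      symm
      rw [← Finset.card_eq_zero, hcard, h0]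
    · -- pick a vertex outside X and an edge containing it
      have hne : (Finset.univ \ X).Nonempty := by
        rw [← Finset.card_pos, hcard]; exact hpos
      obtain ⟨v, hv⟩ := hne
      obtain ⟨e, heJ, hve⟩ := hdeg v hv
      obtain ⟨b, hbfin, hbnd, hblen⟩ :
          ∃ b : List V, b.toFinset = e \ X ∧ b.Nodup ∧ b.length = (e \ X).card :=
        ⟨(e \ X).toList, Finset.toList_toFinset _, Finset.nodup_toList _,
          Finset.length_toList _⟩
      have hvb : v ∈ e \ X := Finset.mem_sdiff.mpr ⟨hve, (Finset.mem_sdiff.mp hv).2⟩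
      have hbpos : 0 < b.length := by
        rw [hblen]; exact Finset.card_pos.mpr ⟨v, hvb⟩
      have hbler : b.length ≤ r := by
        rw [hblen, ← hJ e heJ]; exact Finset.card_le_card (Finset.sdiff_subset)
      set X' : Finset V := X ∪ e with hX'def
      have hsub : e \ X ⊆ Finset.univ \ X := fun x hx => by
        simp only [Finset.mem_sdiff] at hx ⊢
        exact ⟨Finset.mem_univ x, hx.2⟩
      have hdiff : Finset.univ \ X' = (Finset.univ \ X) \ (e \ X) := by
        ext x
        simp only [Finset.mem_sdiff, Finset.mem_union, Finset.mem_univ, true_and, hX'def]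
        tauto
      have hcard' : (Finset.univ \ X').card = n - b.length := by
        rw [hdiff, Finset.card_sdiff_of_subset hsub, hcard, hblen]
      have hblen_le : b.length ≤ n := by
        rw [hblen, ← hcard]; exact Finset.card_le_card hsub
      have hdeg' : ∀ x ∈ Finset.univ \ X', ∃ e ∈ J, x ∈ e := by
        intro x hx
        apply hdeg
        simp only [Finset.mem_sdiff, Finset.mem_union, Finset.mem_univ, true_and,
          hX'def] at hx ⊢
        tauto
      obtain ⟨l', G', hnd', hfin', hgood', hcnt'⟩ :=
        IH (n - b.length) (by omega) X' hcard' hdeg'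
      -- disjointness of b and l'
      have hdisj : ∀ x ∈ b, x ∉ l' := by
        intro x hxb hxl'
        have h1 : x ∈ e \ X := by rw [← hbfin]; exact List.mem_toFinset.mpr hxb
        have h2 : x ∈ Finset.univ \ X' := by rw [← hfin']; exact List.mem_toFinset.mpr hxl'
        simp only [Finset.mem_sdiff, Finset.mem_union, Finset.mem_univ, true_and,
          hX'def] at h1 h2
        tauto
      set l : List V := b ++ l' with hldef
      have hnd : l.Nodup := List.Nodup.append hbnd hnd' hdisj
      have hfin : l.toFinset = Finset.univ \ X := by
        rw [hldef, List.toFinset_append, hbfin, hfin', hdiff]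
        ext x
        simp only [Finset.mem_union, Finset.mem_sdiff, Finset.mem_univ, true_and]
        tauto
      -- the good index from the new batch
      have hi0lt : b.length - 1 < l.length := by
        rw [hldef, List.length_append]; omega
      -- shifted old good indices
      have hshift : ∀ i : Fin l'.length, b.length + (i : ℕ) < l.length := by
        intro i; rw [hldef, List.length_append]; omega
      set f : Fin l'.length ↪ Fin l.length :=
        ⟨fun i => ⟨b.length + i, hshift i⟩, by
          intro i j hij
          simp only [Fin.mk.injEq] at hij
          exact Fin.ext (by omega)⟩ with hfdef
      set G : Finset (Fin l.length) := insert ⟨b.length - 1, hi0lt⟩ (G'.map f) with hGdef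
      have hnotmem : (⟨b.length - 1, hi0lt⟩ : Fin l.length) ∉ G'.map f := by
        intro h
        obtain ⟨i, _, hi⟩ := Finset.mem_map.mp h
        have hi2 : b.length + (i : ℕ) = b.length - 1 := congrArg Fin.val hi
        omega
      refine ⟨l, G, hnd, hfin, ?_, ?_⟩
      · intro i hi
        rw [hGdef, Finset.mem_insert] at hi
        rcases hi with hi | hi
        · -- new batch index
          subst hi
          refine ⟨e, heJ, ?_, ?_⟩
          · have h3 : b[b.length - 1]'(Nat.sub_lt hbpos Nat.one_pos) ∈ e \ X := by
              rw [← hbfin]; exact List.mem_toFinset.mpr (List.getElem_mem _)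
            have h1 : l.get ⟨b.length - 1, hi0lt⟩ = b[b.length - 1]'(Nat.sub_lt hbpos Nat.one_pos) := by
              show (b ++ l')[b.length - 1]'(hi0lt) = _
              exact List.getElem_append_left (by omega)
            rw [h1]
            exact (Finset.mem_sdiff.mp h3).1
          · have htake : l.take (b.length - 1 + 1) = b := by
              have : b.length - 1 + 1 = b.length := by omega
              rw [this, hldef, List.take_left]
            rw [htake, hbfin]
            intro x hx
            by_cases hxX : x ∈ X
            · exact Finset.mem_union_left _ hxX
            · exact Finset.mem_union_right _ (Finset.mem_sdiff.mpr ⟨hx, hxX⟩)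
        · -- shifted index
          obtain ⟨j, hjG, hj⟩ := Finset.mem_map.mp hi
          obtain ⟨e', he'J, he'mem, he'sub⟩ := hgood' j hjG
          refine ⟨e', he'J, ?_, ?_⟩
          · rw [← hj]
            show l.get ⟨b.length + (j : ℕ), hshift j⟩ ∈ e'
            have hget : l.get ⟨b.length + (j : ℕ), hshift j⟩ = l'.get j := by
              show (b ++ l')[b.length + (j : ℕ)]'(hshift j) = l'[(j : ℕ)]
              rw [List.getElem_append_right (by omega)]
              congr 1
              omega
            rw [hget]; exact he'mem
          · rw [← hj]
            show e' ⊆ X ∪ (l.take (b.length + (j : ℕ) + 1)).toFinset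
            have htake : l.take (b.length + (j : ℕ) + 1) = b ++ l'.take ((j : ℕ) + 1) := by
              rw [hldef, show b.length + (j : ℕ) + 1 = b.length + ((j : ℕ) + 1) by omega,
                List.take_append, List.take_of_length_le (by omega), Nat.add_sub_cancel_left]
            rw [htake]
            intro x hx
            have := he'sub hx
            rcases Finset.mem_union.mp this with h | h
            · rcases Finset.mem_union.mp h with h | h
              · exact Finset.mem_union_left _ h
              · -- x ∈ e, so x ∈ X or x ∈ e \ X ⊆ b
                by_cases hxX : x ∈ X
                · exact Finset.mem_union_left _ hxX
                · refine Finset.mem_union_right _ ?_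
                  rw [List.toFinset_append]
                  refine Finset.mem_union_left _ ?_
                  rw [hbfin]
                  exact Finset.mem_sdiff.mpr ⟨h, hxX⟩
            · refine Finset.mem_union_right _ ?_
              rw [List.toFinset_append]
              exact Finset.mem_union_right _ h
      · rw [hGdef, Finset.card_insert_of_notMem hnotmem, Finset.card_map]
        have : n - b.length ≤ r * G'.card := hcnt'
        calc n ≤ (n - b.length) + b.length := by omega
        _ ≤ r * G'.card + r := Nat.add_le_add this hbler
        _ = r * (G'.card + 1) := by ring

/-- edge exploration ordering: if every vertex of `V(J) \ X` has degree
at least 1 in the `r`-uniform hypergraph `J`, and `m = |V(J) \ X|`, then there is an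
ordering `v₁, …, v_m` of `V(J) \ X` such that at least `m/r` of the indices `i`
satisfy that `v_i` has degree at least 1 in the induced subhypergraph
`J[X ∪ {v₁, …, v_i}]`. -/
theorem stmt9 {V : Type*} [Fintype V] [DecidableEq V] (r : ℕ) (hr : 2 ≤ r)
    (J : Finset (Finset V)) (hJ : ∀ e ∈ J, e.card = r)
    (X : Finset V) (hdeg : ∀ v ∈ Finset.univ \ X, ∃ e ∈ J, v ∈ e)
    (m : ℕ) (hm : m = (Finset.univ \ X).card) :
    ∃ v : Fin m → V, Function.Injective v ∧ (∀ i, v i ∉ X) ∧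
      m ≤ r * Set.ncard {i : Fin m |
        ∃ e ∈ J, v i ∈ e ∧ (e : Set V) ⊆ (X : Set V) ∪ v '' {j : Fin m | j ≤ i}} := by
  obtain ⟨l, G, hnd, hfin, hgood, hcnt⟩ := stmt9_key r J hJ m X hm.symm hdeg
  have hml : m = l.length := by
    rw [hm, ← hfin, List.toFinset_card_of_nodup hnd]
  set v : Fin m → V := fun i => l.get (Fin.cast hml i) with hvdef
  have hinj : Function.Injective v := by
    intro i j hij
    have := List.nodup_iff_injective_get.mp hnd hij
    exact Fin.cast_injective hml this
  refine ⟨v, hinj, ?_, ?_⟩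
  · intro i
    have hvl : v i ∈ l := by
      simp only [hvdef, List.get_eq_getElem]; exact List.getElem_mem _
    have : v i ∈ l.toFinset := List.mem_toFinset.mpr hvl
    rw [hfin] at this
    exact (Finset.mem_sdiff.mp this).2
  · set S : Set (Fin m) := {i : Fin m |
      ∃ e ∈ J, v i ∈ e ∧ (e : Set V) ⊆ (X : Set V) ∪ v '' {j : Fin m | j ≤ i}} with hSdef
    set g : Fin l.length ↪ Fin m := ⟨Fin.cast hml.symm, Fin.cast_injective _⟩ with hgdef
    have hGsub : ↑(G.map g) ⊆ S := by
      intro i hi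
      simp only [Finset.coe_map, Set.mem_image, Finset.mem_coe] at hi
      obtain ⟨j, hjG, hj⟩ := hi
      obtain ⟨e, heJ, hmem, hsub⟩ := hgood j hjG
      rw [hSdef]
      refine ⟨e, heJ, ?_, ?_⟩
      · rw [← hj]
        simp only [hvdef, hgdef, Function.Embedding.coeFn_mk]
        have : Fin.cast hml (Fin.cast hml.symm j) = j := rfl
        rw [this]; exact hmem
      · intro x hx
        have hxe : x ∈ e := hx
        rcases Finset.mem_union.mp (hsub hxe) with h | h
        · exact Or.inl h
        · right
          rw [List.mem_toFinset] at h
          obtain ⟨k, hk, hkx⟩ := List.getElem_of_mem h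
          have hklt : k < l.length := by
            have := hk
            rw [List.length_take] at this
            omega
          have hkle : k ≤ (j : ℕ) := by
            rw [List.length_take] at hk
            omega
          refine ⟨(g ⟨k, hklt⟩ : Fin m), ?_, ?_⟩
          · rw [← hj]
            simp only [Set.mem_setOf_eq, hgdef, Function.Embedding.coeFn_mk]
            exact hkle
          · simp only [hvdef, hgdef, Function.Embedding.coeFn_mk]
            have : l.get (Fin.cast hml (Fin.cast hml.symm ⟨k, hklt⟩)) = l[k] := rfl
            rw [this, ← hkx]
            exact (List.getElem_take).symm
    have h1 : (G.map g).card ≤ S.ncard := by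
      rw [← Set.ncard_coe_finset]
      exact Set.ncard_le_ncard hGsub (Set.toFinite S)
    rw [Finset.card_map] at h1
    calc m ≤ r * G.card := hcnt
    _ ≤ r * S.ncard := Nat.mul_le_mul_left r h1
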